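/- Let M = (Q, A, E, q₀, F) be an NFA with total transition relation and |Q| > 1, let [·] : Q → D^m be a factor-decodable code of length m ≥ 2, and let I_{2m−1} and F_{2m} be the sets of the path-encoding construction. Then for every word z ∈ (A×D)^+ with |z| ≥ 2m, if every factor of z of length 2m belongs to F_{2m} and the prefix of z of length 2m−1 belongs to I_{2m−1}, then there exists a path η of M with origin o(η) = q₀ such that z = [η]. -/

import Mathlib

/-- A (nonempty) path of the NFA with transition relation `E`: a nonempty list of
transitions, all in `E`, which are pairwise consecutive. -/
def IsPath {Q A : Type} (E : Set (Q × A × Q)) (η : List (Q × A × Q)) : Prop :=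
  η ≠ [] ∧ (∀ e ∈ η, e ∈ E) ∧ List.Chain' (fun e f => e.2.2 = f.1) η

/-- The origin of a path (as an `Option`, `none` for the empty path). -/
def origState {Q A : Type} (η : List (Q × A × Q)) : Option Q := η.head?.map (fun e => e.1)

/-- The end of a path (as an `Option`, `none` for the empty path). -/
def endState {Q A : Type} (η : List (Q × A × Q)) : Option Q := η.getLast?.map (fun e => e.2.2)

/-- The label of a path. -/
def pathLabel {Q A : Type} (η : List (Q × A × Q)) : List A := η.map (fun e => e.2.1)

/-- The language of the NFA `(Q, A, E, q₀, F)`: labels of paths from `q₀` to a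
final state. -/
def nfaLang {Q A : Type} (E : Set (Q × A × Q)) (q0 : Q) (F : Set Q) : Set (List A) :=
  {w | ∃ η, IsPath E η ∧ origState η = some q0 ∧ (∃ q ∈ F, endState η = some q) ∧
    w = pathLabel η}

/-- The transition relation `E` is total. -/
def TotalRel {Q A : Type} (E : Set (Q × A × Q)) : Prop := ∀ q a, ∃ p, (q, a, p) ∈ E

/-- A code of `Q` into `D` of length `m`: an injective map sending each state to
a word of length `m`. -/
def IsCode {Q D : Type} (m : ℕ) (c : Q → List D) : Prop :=
  Function.Injective c ∧ ∀ q, (c q).length = m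

/-- A word `x ∈ D^{2m-1}` is factor-decodable: there is exactly one position `j`,
`1 ≤ j ≤ m`, such that the factor of `x` of length `m` starting at position `j`
is a codeword. -/
def FactorDecodableWord {Q D : Type} (m : ℕ) (c : Q → List D) (x : List D) : Prop :=
  ∃! j : ℕ, 1 ≤ j ∧ j ≤ m ∧ ∃ q : Q, (x.drop (j - 1)).take m = c q

/-- The code `c` is factor-decodable: every factor of length `2m-1` of every
concatenation of codewords is factor-decodable. -/
def IsFactorDecodableCode {Q D : Type} (m : ℕ) (c : Q → List D) : Prop :=
  IsCode m c ∧
  ∀ l : List Q, l ≠ [] → ∀ x : List D, x.length = 2 * m - 1 →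
    x <:+: (l.map c).flatten → FactorDecodableWord m c x

/-- Encoding of a path `η` of length `≤ m`: the unique word `z ∈ (A × D)^{|η|}`
whose `A`-projection is the label of `η` and whose `D`-projection is the prefix
of length `|η|` of the codeword of the origin of `η` (the empty path encodes to
the empty word). -/
def encShort {Q A D : Type} (c : Q → List D) : List (Q × A × Q) → List (A × D)
  | [] => []
  | e :: t => (pathLabel (e :: t)).zip (c e.1)

/-- Encoding `[η]` of an arbitrary path `η`, obtained by encoding blockwise the
canonical decomposition of `η` into consecutive `m`-paths followed by one final
path of length `< m`. -/
def encPath {Q A D : Type} (c : Q → List D) (m : ℕ) (η : List (Q × A × Q)) :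
    List (A × D) :=
  if h : η.length ≤ m ∨ m = 0 then encShort c η
  else encShort c (η.take m) ++ encPath c m (η.drop m)
termination_by η.length
decreasing_by
  push_neg at h
  simp only [List.length_drop]
  omega

/-- The set `F_{2m}` of the path-encoding construction: all factors of length
`2m` of the encodings `[η'η''η''']` of three consecutive `m`-paths. -/
def Fset {Q A D : Type} (E : Set (Q × A × Q)) (c : Q → List D) (m : ℕ) :
    Set (List (A × D)) :=
  {w | ∃ η₁ η₂ η₃ : List (Q × A × Q),
    IsPath E (η₁ ++ η₂ ++ η₃) ∧ η₁.length = m ∧ η₂.length = m ∧ η₃.length = m ∧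
    w.length = 2 * m ∧ w <:+: encPath c m (η₁ ++ η₂ ++ η₃)}

/-- The set `I_{2m-1}` of the path-encoding construction: prefixes of length
`2m-1` of the encodings `[η'η'']` of two consecutive `m`-paths with
`δ([η']) = [q₀]`. -/
def Iset {Q A D : Type} (E : Set (Q × A × Q)) (q0 : Q) (c : Q → List D) (m : ℕ) :
    Set (List (A × D)) :=
  {w | ∃ η₁ η₂ : List (Q × A × Q),
    IsPath E (η₁ ++ η₂) ∧ η₁.length = m ∧ η₂.length = m ∧
    (encPath c m η₁).map Prod.snd = c q0 ∧
    w = (encPath c m (η₁ ++ η₂)).take (2 * m - 1)}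

/-- The set `T_{2m-1}` of the path-encoding construction: suffixes of length
`2m-1` of the encodings `[η'η''η''']` of consecutive paths with `|η'| = |η''| = m`,
`0 ≤ |η'''| < m` and `e(η''η''') ∈ F`. -/
def Tset {Q A D : Type} (E : Set (Q × A × Q)) (F : Set Q) (c : Q → List D) (m : ℕ) :
    Set (List (A × D)) :=
  {w | ∃ η₁ η₂ η₃ : List (Q × A × Q),
    IsPath E (η₁ ++ η₂ ++ η₃) ∧ η₁.length = m ∧ η₂.length = m ∧ η₃.length < m ∧
    (∃ q ∈ F, endState (η₂ ++ η₃) = some q) ∧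
    w = (encPath c m (η₁ ++ η₂ ++ η₃)).drop
      ((encPath c m (η₁ ++ η₂ ++ η₃)).length - (2 * m - 1))}

section Helpers
namespace DecodeAux

variable {Q A D : Type}

lemma take_zip_right {α β : Type} : ∀ (j : ℕ) (a : List α) (b : List β),
    (a.take j).zip b = (a.zip b).take j
  | 0, a, b => by simp
  | _+1, [], b => by simp
  | _+1, _::_, [] => by simp
  | j+1, x::a, y::b => by simp [take_zip_right j a b]

lemma length_pathLabel (η : List (Q × A × Q)) : (pathLabel η).length = η.length :=
  List.length_map _

lemma exists_origState {η : List (Q × A × Q)} (h : η ≠ []) : ∃ q, origState η = some q := by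
  cases η with
  | nil => exact absurd rfl h
  | cons e t => exact ⟨e.1, rfl⟩

lemma ne_nil_of_length_pos {α : Type} {l : List α} {k : ℕ} (h : l.length = k) (hk : 0 < k) :
    l ≠ [] := by
  intro hnil; subst hnil; simp at h; omega

lemma length_encShort {m : ℕ} (c : Q → List D) (hclen : ∀ q, (c q).length = m)
    {η : List (Q × A × Q)} (h : η.length ≤ m) : (encShort c η).length = η.length := by
  cases η with
  | nil => simp [encShort]
  | cons e t =>
    simp only [encShort, List.length_zip, length_pathLabel, hclen]
    simp at h ⊢; omega

lemma map_snd_encShort {m : ℕ} (c : Q → List D) (hclen : ∀ q, (c q).length = m)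
    {η : List (Q × A × Q)} {q : Q} (hlen : η.length = m) (ho : origState η = some q) :
    (encShort c η).map Prod.snd = c q := by
  cases η with
  | nil => simp [origState] at ho
  | cons e t =>
    have he : e.1 = q := by simpa [origState] using ho
    rw [encShort, he, List.map_snd_zip]
    rw [length_pathLabel, hclen, hlen]

lemma encShort_take (c : Q → List D) (η : List (Q × A × Q)) (j : ℕ) :
    encShort c (η.take j) = (encShort c η).take j := by
  cases η with
  | nil => simp [encShort]
  | cons e t =>
    cases j with
    | zero => simp [encShort]
    | succ k =>
      show encShort c (e :: t.take k) = _
      rw [encShort, encShort]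
      have : pathLabel (e :: t.take k) = (pathLabel (e :: t)).take (k+1) := by
        simp [pathLabel, List.map_take]
      rw [this, take_zip_right]

lemma encPath_of_le (c : Q → List D) (m : ℕ) {η : List (Q × A × Q)} (h : η.length ≤ m) :
    encPath c m η = encShort c η := by
  rw [encPath]; simp [h]

lemma encPath_append (c : Q → List D) {m : ℕ} (hm : 1 ≤ m) {σ : List (Q × A × Q)}
    (hσ : σ.length = m) (ρ : List (Q × A × Q)) :
    encPath c m (σ ++ ρ) = encShort c σ ++ encPath c m (ρ) := by
  cases ρ with
  | nil => simp [encPath_of_le c m (le_of_eq hσ), encPath_of_le c m (by simp : ([] : List (Q×A×Q)).length ≤ m), encShort]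
  | cons f s =>
    rw [encPath]
    have hlen : (σ ++ f :: s).length = m + (s.length + 1) := by simp [hσ]
    have hcond : ¬((σ ++ f :: s).length ≤ m ∨ m = 0) := by
      push_neg; constructor <;> omega
    rw [dif_neg hcond, List.take_left' hσ, List.drop_left' hσ]

lemma isPath_infix {E : Set (Q × A × Q)} {l l' : List (Q × A × Q)} (h : IsPath E l)
    (hinf : l' <:+: l) (hne : l' ≠ []) : IsPath E l' :=
  ⟨hne, fun e he => h.2.1 e (hinf.subset he), h.2.2.infix hinf⟩

lemma origState_append {σ ρ : List (Q × A × Q)} (h : σ ≠ []) :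
    origState (σ ++ ρ) = origState σ := by
  cases σ with
  | nil => exact absurd rfl h
  | cons e t => rfl

lemma origState_take {σ : List (Q × A × Q)} {j : ℕ} (hj : 1 ≤ j) :
    origState (σ.take j) = origState σ := by
  cases σ with
  | nil => simp
  | cons e t => cases j with
    | zero => omega
    | succ k => rfl

lemma endState_eq_origState {σ ρ : List (Q × A × Q)}
    (h : List.Chain' (fun e f => e.2.2 = f.1) (σ ++ ρ)) (hσ : σ ≠ []) (hρ : ρ ≠ []) :
    endState σ = origState ρ := by
  replace h := List.isChain_append.mp h
  have h3 := h.2.2 (σ.getLast hσ) (by rw [List.getLast?_eq_getLast hσ]; rfl)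
    (ρ.head hρ) (by rw [List.head?_eq_head hρ]; rfl)
  rw [endState, origState, List.getLast?_eq_getLast hσ, List.head?_eq_head hρ]
  simp [h3]

lemma isPath_append {E : Set (Q × A × Q)} {σ ρ : List (Q × A × Q)}
    (hσ : IsPath E σ) (hρ : IsPath E ρ) (h : endState σ = origState ρ) :
    IsPath E (σ ++ ρ) := by
  refine ⟨by simp [hσ.1], fun e he => ?_, List.isChain_append.mpr ⟨hσ.2.2, hρ.2.2, ?_⟩⟩
  · rcases List.mem_append.mp he with h' | h'
    · exact hσ.2.1 e h'
    · exact hρ.2.1 e h'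
  · intro x hx y hy
    rw [endState, origState] at h
    rw [show σ.getLast? = some x from hx, show ρ.head? = some y from hy] at h
    simpa using h

end DecodeAux
end Helpers
section Pin
namespace DecodeAux

variable {Q A D : Type}

lemma pin {m : ℕ} {c : Q → List D} (hc : IsFactorDecodableCode m c) (hm : 2 ≤ m)
    (r₁ r₂ r₃ : Q) (i p : ℕ) (hi : i ≤ m) (hp : p + 1 ≤ m) (q : Q)
    (hq : ((((c r₁ ++ c r₂ ++ c r₃).drop i).take (2*m-1)).drop p).take m = c q) :
    (i = 0 ∧ p = 0) ∨ i + p = m := by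
  obtain ⟨⟨hinj, hclen⟩, hfd⟩ := hc
  set ccc := c r₁ ++ c r₂ ++ c r₃ with hccc
  have hlen : ccc.length = 3*m := by simp [hccc, hclen]; omega
  set x := (ccc.drop i).take (2*m-1) with hx
  have hxlen : x.length = 2*m-1 := by
    rw [hx, List.length_take, List.length_drop, hlen]; omega
  have hinf : x <:+: ccc :=
    ((List.take_prefix _ _).isInfix).trans ((List.drop_suffix _ _).isInfix)
  have hflat : ([r₁, r₂, r₃].map c).flatten = ccc := by
    simp [hccc, List.append_assoc]
  have hfdw : FactorDecodableWord m c x :=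
    hfd [r₁, r₂, r₃] (by simp) x hxlen (by rw [hflat]; exact hinf)
  obtain ⟨jj, -, huniq⟩ := hfdw
  have hwin : ∀ p' : ℕ, p' + 1 ≤ m → (x.drop p').take m = (ccc.drop (i + p')).take m := by
    intro p' hp'
    rw [hx, List.drop_take, List.drop_drop, List.take_take]
    congr 1
    exact min_eq_left (by omega)
  have hA : p + 1 = jj := huniq (p+1) ⟨by omega, hp, q, by simpa using hq⟩
  by_cases hi0 : i = 0
  · have hcw : (x.drop 0).take m = c r₁ := by
      rw [hwin 0 (by omega), hi0, List.drop_zero, hccc, List.append_assoc,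
        List.take_left' (hclen r₁)]
    have hB : (0:ℕ) + 1 = jj := huniq 1 ⟨le_refl _, by omega, r₁, by simpa using hcw⟩
    left; constructor <;> omega
  · have hcw : (x.drop (m-i)).take m = c r₂ := by
      rw [hwin (m-i) (by omega)]
      have : i + (m - i) = m := by omega
      rw [this, hccc, List.append_assoc, List.drop_left' (hclen r₁),
        List.take_left' (hclen r₂)]
    have hB : (m-i) + 1 = jj := huniq ((m-i)+1)
      ⟨by omega, by omega, r₂, by simpa using hcw⟩
    right; omega

lemma fset_extract {E : Set (Q × A × Q)} {c : Q → List D} {m : ℕ} (hm : 2 ≤ m)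
    (hclen : ∀ q, (c q).length = m) {w : List (A × D)} (hw : w ∈ Fset E c m) :
    ∃ (ζ₁ ζ₂ ζ₃ : List (Q × A × Q)) (r₁ r₂ r₃ : Q) (i : ℕ),
      IsPath E (ζ₁ ++ ζ₂ ++ ζ₃) ∧ ζ₁.length = m ∧ ζ₂.length = m ∧ ζ₃.length = m ∧
      origState ζ₁ = some r₁ ∧ origState ζ₂ = some r₂ ∧ origState ζ₃ = some r₃ ∧
      i ≤ m ∧
      w = ((encShort c ζ₁ ++ encShort c ζ₂ ++ encShort c ζ₃).drop i).take (2*m) ∧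
      (encShort c ζ₁ ++ encShort c ζ₂ ++ encShort c ζ₃).map Prod.snd
        = c r₁ ++ c r₂ ++ c r₃ := by
  obtain ⟨ζ₁, ζ₂, ζ₃, hpath, h1, h2, h3, hwlen, hinf⟩ := hw
  obtain ⟨r₁, ho1⟩ := exists_origState (ne_nil_of_length_pos h1 (by omega))
  obtain ⟨r₂, ho2⟩ := exists_origState (ne_nil_of_length_pos h2 (by omega))
  obtain ⟨r₃, ho3⟩ := exists_origState (ne_nil_of_length_pos h3 (by omega))
  have henc : encPath c m (ζ₁ ++ ζ₂ ++ ζ₃)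
      = encShort c ζ₁ ++ encShort c ζ₂ ++ encShort c ζ₃ := by
    rw [List.append_assoc, encPath_append c (by omega) h1,
      encPath_append c (by omega) h2, encPath_of_le c m (le_of_eq h3),
      ← List.append_assoc]
  rw [henc] at hinf
  have hE1 : (encShort c ζ₁).length = m := by
    rw [length_encShort c hclen (le_of_eq h1)]; exact h1
  have hE2 : (encShort c ζ₂).length = m := by
    rw [length_encShort c hclen (le_of_eq h2)]; exact h2
  have hE3 : (encShort c ζ₃).length = m := by
    rw [length_encShort c hclen (le_of_eq h3)]; exact h3
  obtain ⟨s, t, hst⟩ := hinf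
  have hlen3 : s.length + (2*m + t.length)
      = (encShort c ζ₁ ++ encShort c ζ₂ ++ encShort c ζ₃).length := by
    rw [← hst]; simp [hwlen]
  have hEEE : (encShort c ζ₁ ++ encShort c ζ₂ ++ encShort c ζ₃).length = 3*m := by
    simp [hE1, hE2, hE3]
    omega
  refine ⟨ζ₁, ζ₂, ζ₃, r₁, r₂, r₃, s.length, hpath, h1, h2, h3, ho1, ho2, ho3,
    by omega, ?_, ?_⟩
  · have hdrop : (encShort c ζ₁ ++ encShort c ζ₂ ++ encShort c ζ₃).drop s.length
        = w ++ t := by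
      rw [← hst, List.append_assoc, List.drop_left]
    rw [hdrop, List.take_left' hwlen]
  · rw [List.map_append, List.map_append, map_snd_encShort c hclen h1 ho1,
      map_snd_encShort c hclen h2 ho2, map_snd_encShort c hclen h3 ho3]

end DecodeAux
end Pin
section Win
namespace DecodeAux

variable {Q A D : Type}

lemma window₀ {E : Set (Q × A × Q)} {c : Q → List D} {m : ℕ} (hm : 2 ≤ m)
    (hc : IsFactorDecodableCode m c) {w : List (A × D)} (hw : w ∈ Fset E c m)
    {q : Q} (hq : (w.take m).map Prod.snd = c q) :
    ∃ σ σ' : List (Q × A × Q), IsPath E (σ ++ σ') ∧ σ.length = m ∧ σ'.length = m ∧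
      origState σ = some q ∧ w = encShort c σ ++ encShort c σ' := by
  have hinj := hc.1.1
  have hclen := hc.1.2
  obtain ⟨ζ₁, ζ₂, ζ₃, r₁, r₂, r₃, i, hpath, h1, h2, h3, ho1, ho2, ho3, hi, hweq, hsnd⟩ :=
    fset_extract hm hclen hw
  have hE1 : (encShort c ζ₁).length = m := by
    rw [length_encShort c hclen (le_of_eq h1)]; exact h1
  have hE2 : (encShort c ζ₂).length = m := by
    rw [length_encShort c hclen (le_of_eq h2)]; exact h2
  have hE3 : (encShort c ζ₃).length = m := by
    rw [length_encShort c hclen (le_of_eq h3)]; exact h3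
  set EEE := encShort c ζ₁ ++ encShort c ζ₂ ++ encShort c ζ₃ with hEEEdef
  have hwtm : w.take m = (EEE.drop i).take m := by
    rw [hweq, List.take_take]
    congr 1
    exact min_eq_left (by omega)
  have hkey : ((((c r₁ ++ c r₂ ++ c r₃).drop i).take (2*m-1)).drop 0).take m = c q := by
    rw [List.drop_zero, List.take_take, min_eq_left (by omega : m ≤ 2*m-1),
      ← hsnd, ← List.map_drop, ← List.map_take, ← hwtm]
    exact hq
  rcases pin hc hm r₁ r₂ r₃ i 0 hi (by omega) q hkey with ⟨hi0, -⟩ | him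
  · subst hi0
    have hw2 : w = encShort c ζ₁ ++ encShort c ζ₂ := by
      rw [hweq, List.drop_zero, hEEEdef,
        List.take_left' (by rw [List.length_append, hE1, hE2]; omega)]
    have hwE1 : w.take m = encShort c ζ₁ := by rw [hw2, List.take_left' hE1]
    have hr1 : r₁ = q := hinj (by
      rw [← map_snd_encShort c hclen h1 ho1, ← hwE1]; exact hq)
    refine ⟨ζ₁, ζ₂, ?_, h1, h2, hr1 ▸ ho1, hw2⟩
    exact isPath_infix hpath ⟨[], ζ₃, by simp⟩
      (by simp [ne_nil_of_length_pos h1 (by omega)])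
  · have hi' : i = m := by omega
    rw [hi'] at hweq
    have hw2 : w = encShort c ζ₂ ++ encShort c ζ₃ := by
      rw [hweq, hEEEdef, List.append_assoc, List.drop_left' hE1,
        List.take_of_length_le (by rw [List.length_append, hE2, hE3]; omega)]
    have hwE2 : w.take m = encShort c ζ₂ := by rw [hw2, List.take_left' hE2]
    have hr2 : r₂ = q := hinj (by
      rw [← map_snd_encShort c hclen h2 ho2, ← hwE2]; exact hq)
    refine ⟨ζ₂, ζ₃, ?_, h2, h3, hr2 ▸ ho2, hw2⟩
    exact isPath_infix hpath ⟨ζ₁, [], by simp⟩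
      (by simp [ne_nil_of_length_pos h2 (by omega)])

lemma window_tail {E : Set (Q × A × Q)} {c : Q → List D} {m : ℕ} (hm : 2 ≤ m)
    (hc : IsFactorDecodableCode m c) {w : List (A × D)} (hw : w ∈ Fset E c m)
    {j : ℕ} (hj1 : 1 ≤ j) (hj2 : j + 1 ≤ m)
    {q : Q} (hq : ((w.drop (m-j)).take m).map Prod.snd = c q) :
    ∃ ζ₂ ζ₃ : List (Q × A × Q), IsPath E (ζ₂ ++ ζ₃) ∧ ζ₂.length = m ∧ ζ₃.length = m ∧
      origState ζ₂ = some q ∧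
      w.drop (m-j) = encShort c ζ₂ ++ (encShort c ζ₃).take j := by
  have hinj := hc.1.1
  have hclen := hc.1.2
  obtain ⟨ζ₁, ζ₂, ζ₃, r₁, r₂, r₃, i, hpath, h1, h2, h3, ho1, ho2, ho3, hi, hweq, hsnd⟩ :=
    fset_extract hm hclen hw
  have hE1 : (encShort c ζ₁).length = m := by
    rw [length_encShort c hclen (le_of_eq h1)]; exact h1
  have hE2 : (encShort c ζ₂).length = m := by
    rw [length_encShort c hclen (le_of_eq h2)]; exact h2
  have hE3 : (encShort c ζ₃).length = m := by
    rw [length_encShort c hclen (le_of_eq h3)]; exact h3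
  set EEE := encShort c ζ₁ ++ encShort c ζ₂ ++ encShort c ζ₃ with hEEEdef
  have hwdm : (w.drop (m-j)).take m = (EEE.drop (i + (m-j))).take m := by
    rw [hweq, List.drop_take, List.drop_drop, List.take_take]
    congr 1
    exact min_eq_left (by omega)
  have hkey : ((((c r₁ ++ c r₂ ++ c r₃).drop i).take (2*m-1)).drop (m-j)).take m
      = c q := by
    rw [List.drop_take, List.drop_drop, List.take_take,
      min_eq_left (by omega : m ≤ 2*m-1-(m-j)),
      ← hsnd, ← List.map_drop, ← List.map_take, ← hwdm]
    exact hq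
  rcases pin hc hm r₁ r₂ r₃ i (m-j) hi (by omega) q hkey with ⟨-, habs⟩ | him
  · omega
  · have hij : i = j := by omega
    rw [hij] at hweq
    have hw2 : w.drop (m-j) = encShort c ζ₂ ++ (encShort c ζ₃).take j := by
      rw [hweq, List.drop_take, List.drop_drop,
        (by omega : j + (m-j) = m), hEEEdef, List.append_assoc,
        List.drop_left' hE1, (by omega : 2*m - (m-j) = m + j),
        List.take_append,
        List.take_of_length_le (by omega : (encShort c ζ₂).length ≤ m + j), hE2,
        (by omega : m + j - m = j)]
    have hwE2 : (w.drop (m-j)).take m = encShort c ζ₂ := by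
      rw [hw2, List.take_left' hE2]
    have hr2 : r₂ = q := hinj (by
      rw [← map_snd_encShort c hclen h2 ho2, ← hwE2]; exact hq)
    refine ⟨ζ₂, ζ₃, ?_, h2, h3, hr2 ▸ ho2, hw2⟩
    exact isPath_infix hpath ⟨ζ₁, [], by simp⟩
      (by simp [ne_nil_of_length_pos h2 (by omega)])

end DecodeAux
end Win
section Key
namespace DecodeAux

variable {Q A D : Type}

lemma key {E : Set (Q × A × Q)} {c : Q → List D} {m : ℕ} (hm : 2 ≤ m)
    (hc : IsFactorDecodableCode m c) :
    ∀ n : ℕ, ∀ z : List (A × D), z.length = n → 2*m ≤ n →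
      (∀ y : List (A × D), y.length = 2*m → y <:+: z → y ∈ Fset E c m) →
      ∀ q : Q, (z.take m).map Prod.snd = c q →
      ∃ η, IsPath E η ∧ origState η = some q ∧ z = encPath c m η := by
  intro n
  induction n using Nat.strong_induction_on with
  | _ n IH =>
    intro z hzn h2m hF q hq
    have hclen := hc.1.2
    have hw0 : z.take (2*m) ∈ Fset E c m :=
      hF _ (by rw [List.length_take]; omega) ((List.take_prefix _ _).isInfix)
    have hq0' : ((z.take (2*m)).take m).map Prod.snd = c q := by
      rw [List.take_take, min_eq_left (by omega)]; exact hq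
    obtain ⟨σ, σ', hpath, hσ, hσ', hoσ, hzw⟩ := window₀ hm hc hw0 hq0'
    have hE1 : (encShort c σ).length = m := by
      rw [length_encShort c hclen (le_of_eq hσ)]; exact hσ
    have hztm : z.take m = encShort c σ := by
      have h' : z.take m = (z.take (2*m)).take m := by
        rw [List.take_take, min_eq_left (by omega)]
      rw [h', hzw, List.take_left' hE1]
    have hmid : (z.drop m).take m = encShort c σ' := by
      have h' : (z.drop m).take m = (z.take (2*m)).drop m := by
        rw [List.drop_take]; congr 1; omega
      rw [h', hzw, List.drop_left' hE1]
    obtain ⟨q', hoσ'⟩ := exists_origState (ne_nil_of_length_pos hσ' (by omega))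
    have hq' : ((z.drop m).take m).map Prod.snd = c q' := by
      rw [hmid]; exact map_snd_encShort c hclen hσ' hoσ'
    have hσne : σ ≠ [] := ne_nil_of_length_pos hσ (by omega)
    have hσ'ne : σ' ≠ [] := ne_nil_of_length_pos hσ' (by omega)
    have hjunc : endState σ = origState σ' := endState_eq_origState hpath.2.2 hσne hσ'ne
    by_cases hn2 : n = 2*m
    · refine ⟨σ ++ σ', hpath, ?_, ?_⟩
      · rw [origState_append hσne]; exact hoσ
      · rw [encPath_append c (by omega) hσ, encPath_of_le c m (le_of_eq hσ'), ← hzw]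
        exact (List.take_of_length_le (by omega)).symm
    · by_cases hn3 : 3*m ≤ n
      · obtain ⟨η', hη'path, hη'orig, hη'enc⟩ := IH (n - m) (by omega) (z.drop m)
          (by rw [List.length_drop, hzn]) (by omega)
          (fun y hy hyinf => hF y hy (hyinf.trans (List.drop_suffix m z).isInfix))
          q' hq'
        refine ⟨σ ++ η',
          isPath_append (isPath_infix hpath ⟨[], σ', by simp⟩ hσne) hη'path
            (by rw [hjunc, hoσ', hη'orig]), ?_, ?_⟩
        · rw [origState_append hσne]; exact hoσ
        · rw [encPath_append c (by omega) hσ, ← hη'enc, ← hztm, List.take_append_drop]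
      · set j := n - 2*m with hj
        have hj1 : 1 ≤ j := by omega
        have hj2 : j + 1 ≤ m := by omega
        have hWmem : z.drop j ∈ Fset E c m :=
          hF _ (by rw [List.length_drop, hzn]; omega) (List.drop_suffix _ _).isInfix
        have hWdrop : (z.drop j).drop (m - j) = z.drop m := by
          rw [List.drop_drop]; congr 1; omega
        have hqW : (((z.drop j).drop (m-j)).take m).map Prod.snd = c q' := by
          rw [hWdrop]; exact hq'
        obtain ⟨ζ₂, ζ₃, hζpath, hζ₂, hζ₃, hoζ₂, hWeq⟩ :=
          window_tail hm hc hWmem hj1 hj2 hqW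
        rw [hWdrop] at hWeq
        have hζ₂ne : ζ₂ ≠ [] := ne_nil_of_length_pos hζ₂ (by omega)
        have hζ₃ne : ζ₃ ≠ [] := ne_nil_of_length_pos hζ₃ (by omega)
        have htakene : ζ₃.take j ≠ [] := by
          apply ne_nil_of_length_pos (rfl : (ζ₃.take j).length = (ζ₃.take j).length)
          rw [List.length_take]; omega
        have hζjunc : endState ζ₂ = origState ζ₃ :=
          endState_eq_origState hζpath.2.2 hζ₂ne hζ₃ne
        have htail : IsPath E (ζ₂ ++ ζ₃.take j) := isPath_append
          (isPath_infix hζpath ⟨[], ζ₃, by simp⟩ hζ₂ne)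
          (isPath_infix hζpath ⟨ζ₂, ζ₃.drop j, by simp⟩ htakene)
          (by rw [hζjunc, origState_take hj1])
        refine ⟨σ ++ (ζ₂ ++ ζ₃.take j),
          isPath_append (isPath_infix hpath ⟨[], σ', by simp⟩ hσne) htail
            (by rw [hjunc, hoσ', origState_append hζ₂ne, hoζ₂]), ?_, ?_⟩
        · rw [origState_append hσne]; exact hoσ
        · rw [encPath_append c (by omega) hσ, encPath_append c (by omega) hζ₂,
            encPath_of_le c m (by rw [List.length_take]; omega),
            encShort_take, ← hWeq, ← hztm, List.take_append_drop]

end DecodeAux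
end Key

/-- **claim (+).** If all factors of length `2m` of a word
`z ∈ (A×D)⁺` with `|z| ≥ 2m` belong to `F_{2m}` and the prefix of `z` of length
`2m-1` belongs to `I_{2m-1}`, then `z = [η]` for some path `η` of `M` with
origin `q₀`. -/
theorem decode_path_from_prefix {Q A D : Type} [Fintype Q]
    (E : Set (Q × A × Q)) (q0 : Q) (F : Set Q) (hq0 : q0 ∉ F)
    (hTot : TotalRel E) (hn : 1 < Fintype.card Q)
    (m : ℕ) (hm : 2 ≤ m) (c : Q → List D) (hc : IsFactorDecodableCode m c) :
    ∀ z : List (A × D), 2 * m ≤ z.length →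
      (∀ y : List (A × D), y.length = 2 * m → y <:+: z → y ∈ Fset E c m) →
      z.take (2 * m - 1) ∈ Iset E q0 c m →
      ∃ η : List (Q × A × Q), IsPath E η ∧ origState η = some q0 ∧
        z = encPath c m η := by

  intro z hlen hF hI
  obtain ⟨η₁, η₂, hp12, h1, h2, hsnd1, hpref⟩ := hI
  have hclen := hc.1.2
  have hE1 : (encShort c η₁).length = m := by
    rw [DecodeAux.length_encShort c hclen (le_of_eq h1)]; exact h1
  have henc : encPath c m (η₁ ++ η₂) = encShort c η₁ ++ encShort c η₂ := by
    rw [DecodeAux.encPath_append c (by omega) h1,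
      DecodeAux.encPath_of_le c m (le_of_eq h2)]
  have hsnd1' : (encShort c η₁).map Prod.snd = c q0 := by
    rw [← DecodeAux.encPath_of_le c m (le_of_eq h1)]; exact hsnd1
  have hq : (z.take m).map Prod.snd = c q0 := by
    have h1' : z.take m = encShort c η₁ := by
      have h2' : z.take m = (z.take (2*m-1)).take m := by
        rw [List.take_take, min_eq_left (by omega)]
      rw [h2', hpref, henc, List.take_take, min_eq_left (by omega), List.take_left' hE1]
    rw [h1']; exact hsnd1'
  exact DecodeAux.key hm hc z.length z rfl hlen hF q0 hq
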